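/- arXiv:math/0611947 — 5 statements merged into one kernel-verified Lean document; each statement's English description precedes it below -/
import Mathlib

section
/- Let x_1, ..., x_n be unit vectors in the n-dimensional real Euclidean space ℝ^n, and let λ_1, ..., λ_n denote the eigenvalues of the Gram matrix XX* = [⟨x_i, x_j⟩] (where X is the n×n matrix whose rows are the vectors x_1, ..., x_n). Then sup over unit vectors y in ℝ^n of |⟨x_1,y⟩ · ⟨x_2,y⟩ ⋯ ⟨x_n,y⟩| is at least (∏_{j=1}^n λ_j)^{1/2} · n^{-n/2}. -/
open scoped BigOperators

-- sign sequence lemma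
lemma exists_signs_aux (n : ℕ) (M : Matrix (Fin n) (Fin n) ℝ) (k : ℕ) :
    ∃ ε : Fin n → ℝ, (∀ j, ε j = 1 ∨ ε j = -1) ∧
      ∀ i : Fin n, (i : ℕ) < k →
        |M i i| ≤ |∑ j ∈ Finset.univ.filter (fun j => j ≤ i), ε j * M i j| := by
  induction k with
  | zero => exact ⟨fun _ => 1, fun _ => Or.inl rfl, fun i hi => absurd hi (by omega)⟩
  | succ k ih =>
    obtain ⟨ε, hε1, hε2⟩ := ih
    by_cases hk : k < n
    · set i₀ : Fin n := ⟨k, hk⟩ with hi₀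
      set S : ℝ := ∑ j ∈ Finset.univ.filter (fun j => j < i₀), ε j * M i₀ j with hS
      set c : ℝ := if 0 ≤ S * M i₀ i₀ then 1 else -1 with hc
      refine ⟨Function.update ε i₀ c, ?_, ?_⟩
      · intro j
        by_cases hj : j = i₀
        · rw [hj, Function.update_self]
          by_cases h : 0 ≤ S * M i₀ i₀
          · left; rw [hc, if_pos h]
          · right; rw [hc, if_neg h]
        · rw [Function.update_of_ne hj]; exact hε1 j
      · intro i hi
        rcases Nat.lt_or_ge (i : ℕ) k with h | h
        · have hsum : ∑ j ∈ Finset.univ.filter (fun j => j ≤ i),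
              Function.update ε i₀ c j * M i j
              = ∑ j ∈ Finset.univ.filter (fun j => j ≤ i), ε j * M i j := by
            apply Finset.sum_congr rfl
            intro j hj
            have hji : j ≤ i := (Finset.mem_filter.mp hj).2
            have hjne : j ≠ i₀ := by
              intro hEq
              have h1 : (j : ℕ) ≤ (i : ℕ) := hji
              have h2 : (j : ℕ) = k := by rw [hEq]
              omega
            rw [Function.update_of_ne hjne]
          rw [hsum]; exact hε2 i h
        · have hik : (i : ℕ) = k := by omega
          have hii : i = i₀ := by
            apply Fin.ext; simp [hi₀, hik]
          rw [hii]
          have hsplit : (Finset.univ.filter (fun j => j ≤ i₀))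
              = insert i₀ (Finset.univ.filter (fun j => j < i₀)) := by
            ext j
            simp [Finset.mem_insert, le_iff_lt_or_eq, or_comm, eq_comm]
          have hnotmem : i₀ ∉ Finset.univ.filter (fun j => j < i₀) := by simp
          rw [hsplit, Finset.sum_insert hnotmem, Function.update_self]
          have hrest : ∑ j ∈ Finset.univ.filter (fun j => j < i₀),
              Function.update ε i₀ c j * M i₀ j = S := by
            rw [hS]
            apply Finset.sum_congr rfl
            intro j hj
            have hji : j < i₀ := (Finset.mem_filter.mp hj).2
            rw [Function.update_of_ne (ne_of_lt hji)]
          rw [hrest]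
          have hsq : (M i₀ i₀) ^ 2 ≤ (c * M i₀ i₀ + S) ^ 2 := by
            by_cases h : 0 ≤ S * M i₀ i₀
            · rw [hc, if_pos h]; nlinarith
            · rw [hc, if_neg h]; nlinarith
          have := Real.sqrt_le_sqrt hsq
          rwa [Real.sqrt_sq_eq_abs, Real.sqrt_sq_eq_abs] at this
    · exact ⟨ε, hε1, fun i hi => hε2 i (by omega)⟩

lemma exists_signs (n : ℕ) (M : Matrix (Fin n) (Fin n) ℝ) :
    ∃ ε : Fin n → ℝ, (∀ j, ε j = 1 ∨ ε j = -1) ∧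
      ∀ i : Fin n,
        |M i i| ≤ |∑ j ∈ Finset.univ.filter (fun j => j ≤ i), ε j * M i j| := by
  obtain ⟨ε, h1, h2⟩ := exists_signs_aux n M n
  exact ⟨ε, h1, fun i => h2 i i.isLt⟩

/-- Theorem 1: if `x 1, ..., x n` are unit vectors in `ℝ^n` and `λ_1, ..., λ_n` are the
eigenvalues of the Gram matrix `[⟨x i, x j⟩]`, then the supremum over unit vectors `y` of
`|⟨x 1, y⟩ ⋯ ⟨x n, y⟩|` is at least `(∏ λ_j)^{1/2} · n^{-n/2}`. -/
theorem stmt0 (n : ℕ) (hn : 0 < n) (x : Fin n → EuclideanSpace ℝ (Fin n))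
    (hx : ∀ i, ‖x i‖ = 1)
    (G : Matrix (Fin n) (Fin n) ℝ)
    (hGdef : G = Matrix.of fun i j => (inner ℝ (x i) (x j) : ℝ))
    (hG : G.IsHermitian) :
    (⨆ y : Metric.sphere (0 : EuclideanSpace ℝ (Fin n)) 1,
        |∏ i, (inner ℝ (x i) (y : EuclideanSpace ℝ (Fin n)) : ℝ)|) ≥
      Real.sqrt (∏ j, hG.eigenvalues j) * (n : ℝ) ^ (-(n : ℝ) / 2) := by
  have hcard : Module.finrank ℝ (EuclideanSpace ℝ (Fin n)) = Fintype.card (Fin n) := by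
    simp [finrank_euclideanSpace]
  haveI : WellFoundedLT (Fin n) := inferInstance
  set e := InnerProductSpace.gramSchmidtOrthonormalBasis hcard x with he
  set M : Matrix (Fin n) (Fin n) ℝ :=
    Matrix.of (fun i j => (inner ℝ (x i) (e j) : ℝ)) with hM
  -- triangularity of M
  have htri : ∀ i j : Fin n, i < j → M i j = 0 := by
    intro i j hij
    have h0 : (inner ℝ (e j) (x i) : ℝ) = 0 :=
      InnerProductSpace.gramSchmidtOrthonormalBasis_inv_triangular hcard x hij
    show (inner ℝ (x i) (e j) : ℝ) = 0
    rw [real_inner_comm]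
    exact h0
  -- G = M * Mᵀ
  have hGMM : G = M * M.transpose := by
    ext i j
    rw [hGdef]
    show (inner ℝ (x i) (x j) : ℝ) = ∑ k, M i k * M.transpose k j
    rw [← e.sum_inner_mul_inner (x i) (x j)]
    apply Finset.sum_congr rfl
    intro k _
    show (inner ℝ (x i) (e k) : ℝ) * (inner ℝ (e k) (x j) : ℝ) = M i k * M.transpose k j
    rw [real_inner_comm (x j) (e k)]
    rfl
  -- det G = (det M)^2
  have hdetG : G.det = (M.det) ^ 2 := by
    rw [hGMM, Matrix.det_mul, Matrix.det_transpose, sq]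
  -- det M = prod of diagonal
  have hdetM : M.det = ∏ i, M i i := by
    have hbt : M.transpose.BlockTriangular id := fun i j hij => htri j i hij
    rw [← Matrix.det_transpose, Matrix.det_of_upperTriangular hbt]
    simp [Matrix.transpose_apply]
  -- product of eigenvalues = det G
  have heig : (∏ j, hG.eigenvalues j) = G.det := by
    rw [hG.det_eq_prod_eigenvalues]
    norm_num
  -- get signs
  obtain ⟨ε, hε1, hε2⟩ := exists_signs n M
  have hεsq : ∀ j, ε j ^ 2 = 1 := by
    intro j; rcases hε1 j with h | h <;> simp [h]
  -- define y
  have hsn : (0:ℝ) < Real.sqrt n := Real.sqrt_pos.mpr (by exact_mod_cast hn)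
  set z : EuclideanSpace ℝ (Fin n) := ∑ j, ε j • e j with hz
  set y : EuclideanSpace ℝ (Fin n) := (Real.sqrt n)⁻¹ • z with hy
  have hnz : ‖z‖ = Real.sqrt n := by
    have h1 : (inner ℝ z z : ℝ) = ∑ j, ε j * ε j := by
      rw [hz]
      rw [e.orthonormal.inner_sum ε ε]
      simp [RCLike.inner_apply, starRingEnd_apply]
    have h2 : (inner ℝ z z : ℝ) = (n : ℝ) := by
      rw [h1]
      have : ∀ j : Fin n, ε j * ε j = 1 := by
        intro j; rcases hε1 j with h | h <;> simp [h]
      simp [this]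
    have h3 : ‖z‖ ^ 2 = (n : ℝ) := by
      rw [← real_inner_self_eq_norm_sq]; exact h2
    rw [← h3, Real.sqrt_sq (norm_nonneg z)]
  have hny : ‖y‖ = 1 := by
    rw [hy, norm_smul, hnz, norm_inv, Real.norm_eq_abs, abs_of_pos hsn,
      inv_mul_cancel₀ (ne_of_gt hsn)]
  have hymem : y ∈ Metric.sphere (0 : EuclideanSpace ℝ (Fin n)) 1 := by
    simp [mem_sphere_iff_norm, hny]
  -- inner products with y
  have hinner : ∀ i : Fin n, (inner ℝ (x i) y : ℝ)
      = (Real.sqrt n)⁻¹ * ∑ j ∈ Finset.univ.filter (fun j => j ≤ i), ε j * M i j := by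
    intro i
    rw [hy, hz, inner_smul_right, inner_sum]
    congr 1
    rw [← Finset.sum_filter_add_sum_filter_not Finset.univ (fun j => j ≤ i)
      (fun j => (inner ℝ (x i) (ε j • e j) : ℝ))]
    have hz2 : ∑ j ∈ Finset.univ.filter (fun j => ¬ j ≤ i),
        (inner ℝ (x i) (ε j • e j) : ℝ) = 0 := by
      apply Finset.sum_eq_zero
      intro j hj
      have hij : i < j := lt_of_not_ge (Finset.mem_filter.mp hj).2
      rw [inner_smul_right]
      have : M i j = 0 := htri i j hij
      simp only [hM, Matrix.of_apply] at this
      simp [this]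
    rw [hz2, add_zero]
    apply Finset.sum_congr rfl
    intro j _
    rw [inner_smul_right]
    simp [hM]
  -- rewrite the power
  have hnn : (0:ℝ) ≤ (n:ℝ) := Nat.cast_nonneg n
  have hpow : ((n:ℝ) ^ (-(n : ℝ) / 2)) = ((Real.sqrt n)⁻¹) ^ n := by
    have h1 : (Real.sqrt n)⁻¹ = (n:ℝ) ^ (-(1:ℝ)/2) := by
      rw [Real.sqrt_eq_rpow, ← Real.rpow_neg hnn]
      norm_num
    rw [h1, ← Real.rpow_natCast ((n:ℝ) ^ (-(1:ℝ)/2)) n, ← Real.rpow_mul hnn]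
    congr 1
    ring
  -- sqrt of eigenvalue product
  have hsqrt : Real.sqrt (∏ j, hG.eigenvalues j) = |M.det| := by
    rw [heig, hdetG, Real.sqrt_sq_eq_abs]
  -- lower bound at y
  have hprodge : Real.sqrt (∏ j, hG.eigenvalues j) * (n : ℝ) ^ (-(n : ℝ) / 2)
      ≤ |∏ i, (inner ℝ (x i) y : ℝ)| := by
    rw [hsqrt, hpow, hdetM, Finset.abs_prod]
    have step1 : (∏ i, |M i i|) * ((Real.sqrt n)⁻¹) ^ n
        = ∏ i : Fin n, ((Real.sqrt n)⁻¹ * |M i i|) := by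
      rw [Finset.prod_mul_distrib, Finset.prod_const, Finset.card_univ, Fintype.card_fin]
      ring
    rw [step1, Finset.abs_prod]
    apply Finset.prod_le_prod
    · intro i _
      positivity
    · intro i _
      rw [hinner i, abs_mul, abs_of_pos (inv_pos.mpr hsn)]
      exact mul_le_mul_of_nonneg_left (hε2 i) (le_of_lt (inv_pos.mpr hsn))
  -- conclude via sup
  have hbdd : BddAbove (Set.range fun y : Metric.sphere (0 : EuclideanSpace ℝ (Fin n)) 1 =>
      |∏ i, (inner ℝ (x i) (y : EuclideanSpace ℝ (Fin n)) : ℝ)|) := by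
    refine ⟨1, ?_⟩
    rintro _ ⟨w, rfl⟩
    dsimp only
    have hw : ‖(w : EuclideanSpace ℝ (Fin n))‖ = 1 := by
      have := w.2
      simp only [mem_sphere_iff_norm, sub_zero] at this; exact this
    rw [Finset.abs_prod]
    apply Finset.prod_le_one
    · intro i _; positivity
    · intro i _
      calc |(inner ℝ (x i) (w : EuclideanSpace ℝ (Fin n)) : ℝ)|
          ≤ ‖x i‖ * ‖(w : EuclideanSpace ℝ (Fin n))‖ := abs_real_inner_le_norm _ _
        _ = 1 := by rw [hx i, hw]; ring
  calc Real.sqrt (∏ j, hG.eigenvalues j) * (n : ℝ) ^ (-(n : ℝ) / 2)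
      ≤ |∏ i, (inner ℝ (x i) y : ℝ)| := hprodge
    _ ≤ _ := le_ciSup hbdd ⟨y, hymem⟩
end

section
/- Let E be an n-dimensional ellipsoid in ℝ^n (not necessarily centered at the origin), i.e. E = c + A[B^n] for some point c ∈ ℝ^n and some linear transformation A of full rank, and suppose E has n-dimensional Lebesgue volume V·b_n. Then E intersects the set H_V = {z = (z_1,...,z_n) ∈ ℝ^n : |∏_{j=1}^n z_j| ≥ V · n^{-n/2}}, i.e. E ∩ H_V ≠ ∅. -/
open MeasureTheory
open scoped BigOperators

noncomputable def stmt2Eps {n : ℕ} (g : Fin n → Fin n → ℝ) (s : Fin n → ℝ) : Fin n → ℝ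
  | j => if 0 ≤ (s j + ∑ k ∈ (Finset.Iio j).attach, stmt2Eps g s k.1 * g j k.1) * g j j
         then 1 else -1
termination_by j => j
decreasing_by all_goals exact Fin.lt_def.mp (Finset.mem_Iio.mp k.2)

lemma stmt2Eps_pm {n : ℕ} (g : Fin n → Fin n → ℝ) (s : Fin n → ℝ) (j : Fin n) :
    stmt2Eps g s j = 1 ∨ stmt2Eps g s j = -1 := by
  rw [stmt2Eps]; split <;> simp

lemma stmt2Eps_mul_self {n : ℕ} (g : Fin n → Fin n → ℝ) (s : Fin n → ℝ) (j : Fin n) :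
    stmt2Eps g s j * stmt2Eps g s j = 1 := by
  rcases stmt2Eps_pm g s j with h | h <;> rw [h] <;> norm_num

lemma stmt2Eps_spec {n : ℕ} (g : Fin n → Fin n → ℝ) (s : Fin n → ℝ) (j : Fin n)
    (hg : ∀ k, j < k → g j k = 0) :
    |g j j| ≤ |s j + ∑ k, stmt2Eps g s k * g j k| := by
  classical
  set T := s j + ∑ k ∈ Finset.Iio j, stmt2Eps g s k * g j k with hT
  have hej : stmt2Eps g s j = if 0 ≤ T * g j j then 1 else -1 := by
    rw [stmt2Eps, hT, Finset.sum_attach (Finset.Iio j) (fun k => stmt2Eps g s k * g j k)]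
  have h1 : ∑ k, stmt2Eps g s k * g j k = ∑ k ∈ Finset.Iic j, stmt2Eps g s k * g j k :=
    (Finset.sum_subset (Finset.subset_univ _) (fun k _ hk => by
      rw [hg k (not_le.mp (fun h => hk (Finset.mem_Iic.mpr h))), mul_zero])).symm
  have h2 : ∑ k ∈ Finset.Iic j, stmt2Eps g s k * g j k
      = stmt2Eps g s j * g j j + ∑ k ∈ Finset.Iio j, stmt2Eps g s k * g j k := by
    rw [← Finset.Iio_insert, Finset.sum_insert (by simp)]
  have hsplit : s j + ∑ k, stmt2Eps g s k * g j k = T + stmt2Eps g s j * g j j := by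
    rw [h1, h2, hT]; ring
  rw [hsplit, hej]
  split_ifs with h
  · rcases abs_cases (T + 1 * g j j) with ⟨he, _⟩ | ⟨he, _⟩ <;>
      rcases abs_cases (g j j) with ⟨hg2, _⟩ | ⟨hg2, _⟩ <;> rw [he, hg2] <;> nlinarith
  · push_neg at h
    rcases abs_cases (T + (-1) * g j j) with ⟨he, _⟩ | ⟨he, _⟩ <;>
      rcases abs_cases (g j j) with ⟨hg2, _⟩ | ⟨hg2, _⟩ <;> rw [he, hg2] <;> nlinarith

/-- Lemma 2: an `n`-dimensional ellipsoid `E = c + A[Bⁿ]` (not necessarily centered at the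
origin) of volume `V·bₙ` intersects the set
`H_V = {z ∈ ℝⁿ : |∏ j, z j| ≥ V · n^{-n/2}}`. -/
theorem stmt2 (n : ℕ) (hn : 0 < n) (A : Matrix (Fin n) (Fin n) ℝ) (hA : IsUnit A.det)
    (c : EuclideanSpace ℝ (Fin n)) (E : Set (EuclideanSpace ℝ (Fin n)))
    (hE : E = (fun v => c + v) '' (Matrix.toEuclideanLin A '' Metric.closedBall 0 1))
    (V : ℝ)
    (hV : volume E =
      ENNReal.ofReal V * volume (Metric.closedBall (0 : EuclideanSpace ℝ (Fin n)) 1)) :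
    (E ∩ {z : EuclideanSpace ℝ (Fin n) |
      V * (n : ℝ) ^ (-(n : ℝ) / 2) ≤ |∏ j, z j|}).Nonempty := by
  classical
  haveI : WellFoundedLT (Fin n) := inferInstance
  -- Step 1 : `V = |A.det|`
  have hd0 : A.det ≠ 0 := hA.ne_zero
  have hVdet : V = |A.det| := by
    have hdet : LinearMap.det (Matrix.toEuclideanLin A : _ →ₗ[ℝ] _) = A.det := by
      have h : (Matrix.toEuclideanLin A : EuclideanSpace ℝ (Fin n) →ₗ[ℝ] EuclideanSpace ℝ (Fin n))
          = Matrix.toLin (PiLp.basisFun 2 ℝ (Fin n)) (PiLp.basisFun 2 ℝ (Fin n)) A := rfl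
      rw [h, LinearMap.det_toLin]
    have hvol : volume E = ENNReal.ofReal |A.det|
        * volume (Metric.closedBall (0 : EuclideanSpace ℝ (Fin n)) 1) := by
      rw [hE, Set.image_add_left, measure_preimage_add,
        Measure.addHaar_image_linearMap, hdet]
    have hne : volume (Metric.closedBall (0 : EuclideanSpace ℝ (Fin n)) 1) ≠ 0 :=
      (Metric.measure_closedBall_pos volume 0 one_pos).ne'
    have htop : volume (Metric.closedBall (0 : EuclideanSpace ℝ (Fin n)) 1) ≠ ⊤ :=
      measure_closedBall_lt_top.ne
    have h0 : (0:ℝ) < |A.det| := abs_pos.mpr hd0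
    have heq : ENNReal.ofReal V = ENNReal.ofReal |A.det| :=
      (ENNReal.mul_left_inj hne htop).mp (hV.symm.trans hvol)
    rcases lt_or_ge V 0 with h | h
    · rw [ENNReal.ofReal_eq_zero.mpr h.le] at heq
      exact absurd heq.symm (by simp [ENNReal.ofReal_eq_zero, not_le, h0, hd0])
    · exact (ENNReal.ofReal_eq_ofReal_iff h (abs_nonneg _)).mp heq
  -- Step 2 : Gram–Schmidt basis from the rows of `A`
  have hfr : Module.finrank ℝ (EuclideanSpace ℝ (Fin n)) = Fintype.card (Fin n) := by simp
  set f : Fin n → EuclideanSpace ℝ (Fin n) := fun j => (WithLp.equiv 2 _).symm (A j) with hfdef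
  set q : OrthonormalBasis (Fin n) ℝ (EuclideanSpace ℝ (Fin n)) :=
    InnerProductSpace.gramSchmidtOrthonormalBasis hfr f with hqdef
  have key : |∏ i, (inner ℝ (q i) (f i) : ℝ)| = |A.det| := by
    have hdet : q.toBasis.det f = ∏ i, (inner ℝ (q i) (f i) : ℝ) :=
      InnerProductSpace.gramSchmidtOrthonormalBasis_det hfr f
    rw [← hdet]
    have hf : f = (Matrix.toEuclideanLin A.transpose) ∘ ⇑(EuclideanSpace.basisFun (Fin n) ℝ) := by
      funext j
      simp only [Function.comp_apply]
      rw [EuclideanSpace.basisFun_apply]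
      show f j = Matrix.toEuclideanLin A.transpose (EuclideanSpace.single j 1)
      rw [EuclideanSpace.single, Matrix.toEuclideanLin_apply_piLp_toLp]
      rw [hfdef]
      ext i
      simp [Matrix.mulVec_single, Matrix.transpose_apply]
    rw [hf, Module.Basis.det_comp]
    have hdetA : LinearMap.det (Matrix.toEuclideanLin A.transpose : _ →ₗ[ℝ] _) = A.det := by
      have h2 : (Matrix.toEuclideanLin A.transpose : EuclideanSpace ℝ (Fin n) →ₗ[ℝ] EuclideanSpace ℝ (Fin n))
          = Matrix.toLin (PiLp.basisFun 2 ℝ (Fin n)) (PiLp.basisFun 2 ℝ (Fin n)) A.transpose := rfl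
      rw [h2, LinearMap.det_toLin, Matrix.det_transpose]
    rw [hdetA, abs_mul]
    rcases q.det_to_matrix_orthonormalBasis_real (EuclideanSpace.basisFun (Fin n) ℝ) with h1 | h1 <;>
      rw [h1] <;> simp
  -- Step 3 : signs and the candidate point
  have hsqrt : (0:ℝ) < Real.sqrt n := Real.sqrt_pos.mpr (by exact_mod_cast hn)
  set gmat : Fin n → Fin n → ℝ := fun j k => (Real.sqrt n)⁻¹ * (inner ℝ (q k) (f j) : ℝ) with hgdef
  set eps : Fin n → ℝ := stmt2Eps gmat (fun j => c j) with hedef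
  have hgzero : ∀ j k : Fin n, j < k → gmat j k = 0 := by
    intro j k hjk
    show (Real.sqrt n)⁻¹ * (inner ℝ (q k) (f j) : ℝ) = 0
    rw [hqdef, InnerProductSpace.gramSchmidtOrthonormalBasis_inv_triangular hfr f hjk, mul_zero]
  set w : EuclideanSpace ℝ (Fin n) := ∑ k, eps k • (q k : EuclideanSpace ℝ (Fin n)) with hwdef
  have hww : (inner ℝ w w : ℝ) = n := by
    rw [hwdef, inner_sum]
    have : ∀ k : Fin n, (inner ℝ (∑ l, eps l • (q l : EuclideanSpace ℝ (Fin n))) (eps k • q k) : ℝ)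
        = eps k * eps k := by
      intro k
      rw [real_inner_smul_right, sum_inner]
      have : ∀ l : Fin n, (inner ℝ (eps l • (q l : EuclideanSpace ℝ (Fin n))) (q k : EuclideanSpace ℝ (Fin n)) : ℝ)
          = if l = k then eps l else 0 := by
        intro l
        rw [real_inner_smul_left]
        rcases eq_or_ne l k with h | h
        · subst h; rw [if_pos rfl, real_inner_self_eq_norm_sq, q.orthonormal.1 l]; norm_num
        · rw [if_neg h, q.orthonormal.2 h, mul_zero]
      rw [Finset.sum_congr rfl (fun l _ => this l), Finset.sum_ite_eq' Finset.univ k eps,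
        if_pos (Finset.mem_univ k)]
    have heps : ∀ k : Fin n, eps k * eps k = 1 :=
      fun k => stmt2Eps_mul_self gmat (fun j => c j) k
    rw [Finset.sum_congr rfl (fun k _ => this k),
      Finset.sum_congr rfl (fun k _ => heps k)]
    simp
  have hnormw : ‖w‖ = Real.sqrt n := by
    rw [← Real.sqrt_sq (norm_nonneg w), ← real_inner_self_eq_norm_sq, hww]
  set u : EuclideanSpace ℝ (Fin n) := (Real.sqrt n)⁻¹ • w with hudef
  have hnormu : ‖u‖ = 1 := by
    rw [hudef, norm_smul, hnormw, Real.norm_eq_abs, abs_of_pos (inv_pos.mpr hsqrt),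
      inv_mul_cancel₀ hsqrt.ne']
  set z : EuclideanSpace ℝ (Fin n) := c + Matrix.toEuclideanLin A u with hzdef
  have hzE : z ∈ E := by
    rw [hE]
    exact ⟨Matrix.toEuclideanLin A u, ⟨u, by simp [Metric.mem_closedBall, hnormu], rfl⟩, rfl⟩
  -- coordinates of `z`
  have hinner : ∀ j : Fin n, (Matrix.toEuclideanLin A u) j = (inner ℝ (f j) u : ℝ) := by
    intro j
    rw [PiLp.inner_apply]
    simp only [RCLike.inner_apply, conj_trivial]
    show ∑ x, A j x * u x = _
    exact Finset.sum_congr rfl (fun x _ => mul_comm (A j x) (u x))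
  have hz : ∀ j : Fin n, z j = c j + ∑ k, eps k * gmat j k := by
    intro j
    have h1 : z j = c j + (Matrix.toEuclideanLin A u) j := rfl
    rw [h1, hinner j, hudef, real_inner_smul_right, hwdef, inner_sum]
    congr 1
    rw [Finset.mul_sum]
    refine Finset.sum_congr rfl (fun k _ => ?_)
    rw [real_inner_smul_right, real_inner_comm]
    show (Real.sqrt n)⁻¹ * (eps k * (inner ℝ (q k) (f j) : ℝ))
        = eps k * ((Real.sqrt n)⁻¹ * (inner ℝ (q k) (f j) : ℝ))
    ring
  -- the lower bound on each coordinate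
  have hlow : ∀ j : Fin n, |gmat j j| ≤ |z j| := by
    intro j
    rw [hz j]
    exact stmt2Eps_spec gmat (fun j => c j) j (hgzero j)
  -- product estimate
  have hprod : V * (n : ℝ) ^ (-(n : ℝ) / 2) ≤ |∏ j, z j| := by
    have h1 : |∏ j, z j| = ∏ j, |z j| := Finset.abs_prod _ _
    have h2 : ∏ j, |gmat j j| ≤ ∏ j, |z j| :=
      Finset.prod_le_prod (fun j _ => abs_nonneg _) (fun j _ => hlow j)
    have habs : ∀ j : Fin n, |gmat j j| = (Real.sqrt n)⁻¹ * |(inner ℝ (q j) (f j) : ℝ)| := by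
      intro j
      show |(Real.sqrt n)⁻¹ * (inner ℝ (q j) (f j) : ℝ)| = _
      rw [abs_mul, abs_of_pos (inv_pos.mpr hsqrt)]
    have h3 : ∏ j, |gmat j j| = ((Real.sqrt n)⁻¹) ^ n * ∏ i, |(inner ℝ (q i) (f i) : ℝ)| := by
      rw [Finset.prod_congr rfl (fun j _ => habs j), Finset.prod_mul_distrib,
        Finset.prod_const, Finset.card_univ, Fintype.card_fin]
    have h4 : ((Real.sqrt n)⁻¹ : ℝ) ^ n = (n:ℝ) ^ (-(n:ℝ)/2) := by
      have hn0 : (0:ℝ) ≤ n := n.cast_nonneg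
      rw [← Real.rpow_natCast ((Real.sqrt n)⁻¹) n, Real.sqrt_eq_rpow,
        ← Real.rpow_neg_one ((n:ℝ) ^ (1/2:ℝ)), ← Real.rpow_mul hn0, ← Real.rpow_mul hn0]
      congr 1
      ring
    have h5 : ∏ j, |gmat j j| = (n:ℝ)^(-(n:ℝ)/2) * V := by
      rw [h3, h4, ← Finset.abs_prod, key, hVdet]
    rw [h1]
    calc V * (n : ℝ) ^ (-(n : ℝ) / 2) = ∏ j, |gmat j j| := by rw [h5]; ring
      _ ≤ ∏ j, |z j| := h2
  exact ⟨z, hzE, hprod⟩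
end

section
/- Let A be an n×n real matrix. Then there exists a vector y in the closed unit ball of ℝ^n such that |∏_{j=1}^n (Ay)_j| ≥ |det A| · n^{-n/2}, where (Ay)_j denotes the j-th coordinate of Ay. -/
open scoped BigOperators

open scoped RealInnerProductSpace

private lemma sign_step (P d : ℝ) : |d| ≤ |P + (if 0 ≤ P * d then 1 else -1) * d| := by
  split_ifs with h
  · rw [one_mul]
    rcases le_or_gt 0 d with hd | hd
    · rcases le_or_gt 0 P with hP | hP
      · rw [abs_of_nonneg hd, abs_of_nonneg (by linarith)]; linarith
      · have : d = 0 := by nlinarith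
        simp [this]
    · rcases le_or_gt 0 P with hP | hP
      · have hP0 : P = 0 := by nlinarith
        simp [hP0]
      · rw [abs_of_neg hd, abs_of_neg (by linarith)]; linarith
  · push_neg at h
    rw [neg_one_mul]
    rcases le_or_gt 0 d with hd | hd
    · have hP : P < 0 := by nlinarith
      rw [abs_of_nonneg hd, abs_of_neg (by linarith)]; linarith
    · have hP : 0 < P := by nlinarith
      rw [abs_of_neg hd, abs_of_nonneg (by linarith)]; linarith

private noncomputable def signs {n : ℕ} (c : Fin n → Fin n → ℝ) : Fin n → ℝ := fun j =>
  if 0 ≤ (∑ i ∈ (Finset.Iio j).attach, signs c i.1 * c j i.1) * c j j then 1 else -1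
termination_by j => (j : ℕ)
decreasing_by all_goals exact Fin.lt_iff_val_lt_val.mp (Finset.mem_Iio.mp i.2)

private lemma signs_eq {n : ℕ} (c : Fin n → Fin n → ℝ) (j : Fin n) :
    signs c j = if 0 ≤ (∑ i ∈ Finset.Iio j, signs c i * c j i) * c j j then 1 else -1 := by
  rw [signs, Finset.sum_attach (Finset.Iio j) (fun i => signs c i * c j i)]

private lemma signs_one_or_neg_one {n : ℕ} (c : Fin n → Fin n → ℝ) (j : Fin n) :
    signs c j = 1 ∨ signs c j = -1 := by
  rw [signs_eq]; split_ifs <;> simp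

private lemma signs_spec {n : ℕ} (c : Fin n → Fin n → ℝ) (j : Fin n) :
    |c j j| ≤ |(∑ i ∈ Finset.Iio j, signs c i * c j i) + signs c j * c j j| := by
  rw [signs_eq]
  exact sign_step _ _

/-- For any `n × n` real matrix `A` there is a vector `y` in the closed Euclidean unit ball
with `|∏ j, (A y) j| ≥ |det A| · n^{-n/2}`. -/
theorem stmt3 (n : ℕ) (A : Matrix (Fin n) (Fin n) ℝ) :
    ∃ y : EuclideanSpace ℝ (Fin n), ‖y‖ ≤ 1 ∧
      |A.det| * (n : ℝ) ^ (-(n : ℝ) / 2) ≤ |∏ j, Matrix.toEuclideanLin A y j| := by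
  classical
  rcases Nat.eq_zero_or_pos n with hn | hn
  · subst hn
    refine ⟨0, by simp, ?_⟩
    simp [Matrix.det_fin_zero]
  haveI : NeZero n := ⟨hn.ne'⟩
  by_cases hdet : IsUnit A
  swap
  · have hd : A.det = 0 := by
      by_contra h
      exact hdet ((Matrix.isUnit_iff_isUnit_det A).mpr (isUnit_iff_ne_zero.mpr h))
    refine ⟨0, by simp, ?_⟩
    have hy0 : Matrix.toEuclideanLin A 0 = 0 := map_zero _
    rw [hy0, hd]
    have : ∏ j, (0 : EuclideanSpace ℝ (Fin n)) j = 0 := by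
      simp [hn.ne']
    rw [this]
    simp
  haveI : NeZero n := ⟨hn.ne'⟩
  haveI : WellFoundedLT (Fin n) := inferInstance
  set f : Fin n → EuclideanSpace ℝ (Fin n) := fun j => (WithLp.equiv 2 (Fin n → ℝ)).symm (A j) with hf
  have hfi : LinearIndependent ℝ f := by
    have h1 : LinearIndependent ℝ (fun i => A i) := Matrix.linearIndependent_rows_iff_isUnit.mpr hdet
    exact h1.map' (WithLp.linearEquiv 2 ℝ (Fin n → ℝ)).symm.toLinearMap (LinearEquiv.ker _)
  have hcard : Module.finrank ℝ (EuclideanSpace ℝ (Fin n)) = Fintype.card (Fin n) := by simp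
  set b := InnerProductSpace.gramSchmidtOrthonormalBasis hcard f with hb
  set R : Fin n → Fin n → ℝ := fun j i => ⟪b i, f j⟫ with hR
  have htri : ∀ {j i : Fin n}, j < i → R j i = 0 := fun hij =>
    InnerProductSpace.gramSchmidtOrthonormalBasis_inv_triangular hcard f hij
  -- determinant identity
  have hdetprod : |A.det| = ∏ j, |R j j| := by
    set e := EuclideanSpace.basisFun (Fin n) ℝ with he
    have h1 : e.toBasis.det f = A.det := by
      rw [Module.Basis.det_apply]
      have hm : e.toBasis.toMatrix f = A.transpose := by
        ext i j
        rw [Module.Basis.toMatrix_apply, Matrix.transpose_apply]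
        simp [he, hf, OrthonormalBasis.coe_toBasis_repr_apply, EuclideanSpace.basisFun_repr]
      rw [hm, Matrix.det_transpose]
    have h2 : e.toBasis.det f = e.toBasis.det ⇑b * b.toBasis.det f := by
      rw [Module.Basis.det_apply, Module.Basis.det_apply, Module.Basis.det_apply, ← Matrix.det_mul,
        ← OrthonormalBasis.coe_toBasis b, Module.Basis.toMatrix_mul_toMatrix]
    have h3 : |e.toBasis.det ⇑b| = 1 := by
      rw [← Real.norm_eq_abs]; exact e.det_to_matrix_orthonormalBasis b
    have h4 : b.toBasis.det f = ∏ j, R j j := InnerProductSpace.gramSchmidtOrthonormalBasis_det hcard f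
    rw [← h1, h2, abs_mul, h3, one_mul, h4, Finset.abs_prod]
  set s := signs R with hsdef
  set t : Fin n → ℝ := fun i => s i * (Real.sqrt n)⁻¹ with ht
  set y := ∑ i, t i • (b i) with hy
  have h0n : (0:ℝ) ≤ n := n.cast_nonneg
  have hpos : (0:ℝ) < n := by exact_mod_cast hn
  have hsq : ∀ i, s i ^ 2 = 1 := by
    intro i; rcases signs_one_or_neg_one R i with h | h <;> rw [hsdef, h] <;> norm_num
  have hnorm : ‖y‖ ≤ 1 := by
    have hinner : ⟪y, y⟫ = 1 := by
      rw [hy, b.orthonormal.inner_sum t t Finset.univ]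
      have hc : ∀ i ∈ Finset.univ, (starRingEnd ℝ) (t i) * t i = (n:ℝ)⁻¹ := by
        intro i _
        have : t i * t i = s i ^ 2 * ((Real.sqrt n)⁻¹ * (Real.sqrt n)⁻¹) := by rw [ht]; ring
        rw [starRingEnd_apply, star_trivial, this, hsq i, one_mul, ← mul_inv,
          Real.mul_self_sqrt h0n]
      rw [Finset.sum_congr rfl hc, Finset.sum_const, Finset.card_univ, Fintype.card_fin,
        nsmul_eq_mul, mul_inv_cancel₀ hpos.ne']
    have h2 : ‖y‖ ^ 2 = 1 := by rw [← real_inner_self_eq_norm_sq]; exact hinner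
    nlinarith [norm_nonneg y]
  refine ⟨y, hnorm, ?_⟩
  have hcoord : ∀ j, Matrix.toEuclideanLin A y j
      = (Real.sqrt n)⁻¹ * ((∑ i ∈ Finset.Iio j, s i * R j i) + s j * R j j) := by
    intro j
    have h1 : Matrix.toEuclideanLin A y j = ⟪f j, y⟫ := by
      rw [Matrix.toEuclideanLin_apply, PiLp.inner_apply]
      simp [Matrix.mulVec, dotProduct, hf, mul_comm]
    have h2 : ⟪f j, y⟫ = ∑ i, t i * R j i := by
      rw [hy, inner_sum]
      refine Finset.sum_congr rfl fun i _ => ?_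
      rw [real_inner_smul_right, hR, real_inner_comm]
    have h3 : ∑ i, t i * R j i = ∑ i ∈ Finset.Iic j, t i * R j i := by
      symm
      apply Finset.sum_subset (Finset.subset_univ _)
      intro i _ hi
      have hji : j < i := by simpa [Finset.mem_Iic, not_le] using hi
      rw [htri hji, mul_zero]
    have h4 : ∑ i ∈ Finset.Iic j, t i * R j i
        = t j * R j j + ∑ i ∈ Finset.Iio j, t i * R j i := by
      rw [← Finset.Iio_insert, Finset.sum_insert (by simp)]
    have h5 : ∀ i, t i * R j i = (Real.sqrt n)⁻¹ * (s i * R j i) := fun i => by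
      simp only [ht]; ring
    rw [h1, h2, h3, h4, Finset.sum_congr rfl (fun i _ => h5 i), ← Finset.mul_sum, h5 j]
    ring
  have hjbound : ∀ j, (Real.sqrt n)⁻¹ * |R j j| ≤ |Matrix.toEuclideanLin A y j| := by
    intro j
    rw [hcoord j, abs_mul, abs_of_nonneg (inv_nonneg.2 (Real.sqrt_nonneg _))]
    exact mul_le_mul_of_nonneg_left (by rw [hsdef]; exact signs_spec R j)
      (inv_nonneg.2 (Real.sqrt_nonneg _))
  have hpow : (n:ℝ) ^ (-(n:ℝ)/2) = ((Real.sqrt n)⁻¹) ^ n := by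
    rw [Real.sqrt_eq_rpow, ← Real.rpow_neg h0n, ← Real.rpow_natCast ((n:ℝ) ^ (-(1/2):ℝ)) n,
      ← Real.rpow_mul h0n]
    norm_num
    ring_nf
  calc |A.det| * (n:ℝ) ^ (-(n:ℝ)/2) = ∏ j, ((Real.sqrt n)⁻¹ * |R j j|) := by
        rw [Finset.prod_mul_distrib, Finset.prod_const, Finset.card_univ, Fintype.card_fin,
          hdetprod, hpow]
        ring
    _ ≤ ∏ j, |Matrix.toEuclideanLin A y j| :=
        Finset.prod_le_prod (fun j _ => by positivity) (fun j _ => hjbound j)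
    _ = |∏ j, Matrix.toEuclideanLin A y j| := (Finset.abs_prod _ _).symm
end

section
/- Let x_1, ..., x_n be unit vectors in ℝ^n, and let λ_1, ..., λ_n denote the eigenvalues of the Gram matrix XX* = [⟨x_i, x_j⟩] (where X is the n×n matrix whose rows are the vectors x_1, ..., x_n). If all λ_j are positive, then sup over unit vectors y in ℝ^n of |⟨x_1,y⟩ ⋯ ⟨x_n,y⟩| is at least (n / (λ_1^{-1} + ⋯ + λ_n^{-1}))^{n/2} · n^{-n/2}. -/
open scoped BigOperators

-- Hypercube averaging: there exist signs ε with εᵀAε ≤ tr A.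
lemma cube_signs (n : ℕ) (A : Matrix (Fin n) (Fin n) ℝ) :
    ∃ ε : Fin n → ℝ, (∀ i, ε i = 1 ∨ ε i = -1) ∧
      ∑ i, ε i * (A.mulVec ε i) ≤ A.trace := by
  classical
  set sg : Bool → ℝ := fun b => if b then 1 else -1 with hsgdef
  have hsg : ∀ b, sg b = 1 ∨ sg b = -1 := by intro b; cases b <;> simp [sg]
  have hsgsq : ∀ b, sg b * sg b = 1 := by intro b; cases b <;> norm_num [sg]
  have hsgneg : ∀ b, sg (!b) = -sg b := by intro b; cases b <;> norm_num [sg]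
  set q : (Fin n → Bool) → ℝ :=
    fun b => ∑ i, ∑ j, sg (b i) * (A i j * sg (b j)) with hqdef
  have hS0 : ∀ i j : Fin n, i ≠ j →
      ∑ b : Fin n → Bool, sg (b i) * sg (b j) = 0 := by
    intro i j hij
    apply Finset.sum_ninvolution (g := fun b => Function.update b i (!(b i)))
    · intro b
      have h1 : Function.update b i (!(b i)) i = !(b i) := Function.update_self _ _ _
      have h2 : Function.update b i (!(b i)) j = b j := Function.update_of_ne (Ne.symm hij) _ _
      rw [h1, h2, hsgneg]; ring
    · intro b _
      intro hcon
      have := congrFun hcon i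
      rw [Function.update_self] at this
      exact (Bool.not_ne_self (b i)) this
    · intro b; exact Finset.mem_univ _
    · intro b
      funext k
      by_cases hk : k = i
      · subst hk; simp
      · simp [Function.update_of_ne hk]
  have hSd : ∀ i : Fin n,
      ∑ b : Fin n → Bool, sg (b i) * sg (b i) = (2 : ℝ) ^ n := by
    intro i
    have : ∀ b : Fin n → Bool, sg (b i) * sg (b i) = 1 := fun b => hsgsq _
    rw [Finset.sum_congr rfl fun b _ => this b, Finset.sum_const, Finset.card_univ]
    simp [Fintype.card_fun]
  have hsum : ∑ b : Fin n → Bool, q b = (2 : ℝ) ^ n * A.trace := by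
    have : ∑ b : Fin n → Bool, q b
        = ∑ i, ∑ j, A i j * (∑ b : Fin n → Bool, sg (b i) * sg (b j)) := by
      rw [Finset.sum_comm]
      refine Finset.sum_congr rfl fun i _ => ?_
      rw [Finset.sum_comm]
      refine Finset.sum_congr rfl fun j _ => ?_
      rw [Finset.mul_sum]
      exact Finset.sum_congr rfl fun b _ => by ring
    rw [this]
    have : ∀ i : Fin n, ∑ j, A i j * (∑ b : Fin n → Bool, sg (b i) * sg (b j))
        = (2 : ℝ) ^ n * A i i := by
      intro i
      rw [Finset.sum_eq_single i]
      · rw [hSd i]; ring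
      · intro j _ hji
        rw [hS0 i j (Ne.symm hji), mul_zero]
      · intro h; exact absurd (Finset.mem_univ i) h
    rw [Finset.sum_congr rfl fun i _ => this i, ← Finset.mul_sum]
    rfl
  have hne : (Finset.univ : Finset (Fin n → Bool)).Nonempty := Finset.univ_nonempty
  have hle : ∑ b : Fin n → Bool, q b ≤ ∑ _b : Fin n → Bool, A.trace := by
    rw [hsum, Finset.sum_const, Finset.card_univ, nsmul_eq_mul]
    simp [Fintype.card_fun]
  obtain ⟨b, _, hb⟩ := Finset.exists_le_of_sum_le hne hle
  refine ⟨fun i => sg (b i), fun i => hsg _, ?_⟩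
  have : ∑ i, sg (b i) * (A.mulVec (fun j => sg (b j)) i) = q b := by
    refine Finset.sum_congr rfl fun i _ => ?_
    simp only [Matrix.mulVec, dotProduct, Finset.mul_sum]
  rw [this]; exact hb

-- A right inverse of G with trace equal to sum of inverse eigenvalues.
lemma right_inv_trace (n : ℕ) (G : Matrix (Fin n) (Fin n) ℝ)
    (hG : G.IsHermitian) (hpos : ∀ j, 0 < hG.eigenvalues j) :
    ∃ M : Matrix (Fin n) (Fin n) ℝ, G * M = 1 ∧
      M.trace = ∑ j, (hG.eigenvalues j)⁻¹ := by
  classical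
  set U : Matrix (Fin n) (Fin n) ℝ := (hG.eigenvectorUnitary : Matrix (Fin n) (Fin n) ℝ)
  have hUU : star U * U = 1 := Unitary.coe_star_mul_self hG.eigenvectorUnitary
  have hUU' : U * star U = 1 := Unitary.coe_mul_star_self hG.eigenvectorUnitary
  set D : Matrix (Fin n) (Fin n) ℝ := Matrix.diagonal hG.eigenvalues
  set D' : Matrix (Fin n) (Fin n) ℝ := Matrix.diagonal fun j => (hG.eigenvalues j)⁻¹
  have hDD' : D * D' = 1 := by
    rw [Matrix.diagonal_mul_diagonal]
    have : (fun j => hG.eigenvalues j * (hG.eigenvalues j)⁻¹) = fun _ => (1 : ℝ) := by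
      funext j; exact mul_inv_cancel₀ (ne_of_gt (hpos j))
    rw [this, Matrix.diagonal_one]
  have hspec : G = U * D * star U := by
    have := hG.spectral_theorem
    rwa [show (RCLike.ofReal ∘ hG.eigenvalues : Fin n → ℝ) = hG.eigenvalues by
      funext j; simp [RCLike.ofReal_real_eq_id]] at this
  refine ⟨U * D' * star U, ?_, ?_⟩
  · have h1 : G * (U * D' * star U) = U * (D * ((star U * U) * (D' * star U))) := by
      rw [hspec]; simp only [mul_assoc]
    rw [h1, hUU, one_mul, ← mul_assoc D D', hDD', one_mul]
    exact hUU'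
  · calc (U * D' * star U).trace = (star U * (U * D')).trace := by
          rw [Matrix.trace_mul_comm]
      _ = ((star U * U) * D').trace := by rw [mul_assoc]
      _ = D'.trace := by rw [hUU, one_mul]
      _ = ∑ j, (hG.eigenvalues j)⁻¹ := Matrix.trace_diagonal _

/-- If `x 1, ..., x n` are unit vectors in `ℝⁿ` and the eigenvalues `λ_j` of the Gram matrix
`[⟨x i, x j⟩]` are all positive, then the supremum over unit vectors `y` of
`|⟨x 1, y⟩ ⋯ ⟨x n, y⟩|` is at least `(n / (λ_1⁻¹ + ⋯ + λ_n⁻¹))^{n/2} · n^{-n/2}`. -/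
theorem stmt4 (n : ℕ) (hn : 0 < n) (x : Fin n → EuclideanSpace ℝ (Fin n))
    (hx : ∀ i, ‖x i‖ = 1)
    (G : Matrix (Fin n) (Fin n) ℝ)
    (hGdef : G = Matrix.of fun i j => (inner ℝ (x i) (x j) : ℝ))
    (hG : G.IsHermitian)
    (hpos : ∀ j, 0 < hG.eigenvalues j) :
    (⨆ y : Metric.sphere (0 : EuclideanSpace ℝ (Fin n)) 1,
        |∏ i, (inner ℝ (x i) (y : EuclideanSpace ℝ (Fin n)) : ℝ)|) ≥
      ((n : ℝ) / ∑ j, (hG.eigenvalues j)⁻¹) ^ ((n : ℝ) / 2) * (n : ℝ) ^ (-(n : ℝ) / 2) := by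
  classical
  obtain ⟨M, hGM, htr⟩ := right_inv_trace n G hG hpos
  obtain ⟨ε, hε, hqle⟩ := cube_signs n M
  set T : ℝ := ∑ j, (hG.eigenvalues j)⁻¹ with hT
  set c : Fin n → ℝ := M.mulVec ε with hc
  set y0 : EuclideanSpace ℝ (Fin n) := ∑ i, c i • x i with hy0
  have habs : ∀ i, |ε i| = 1 := fun i => by rcases hε i with h | h <;> simp [h]
  have hinner : ∀ j, (inner ℝ (x j) y0 : ℝ) = ε j := by
    intro j
    rw [hy0, inner_sum]
    have h1 : ∀ i, (inner ℝ (x j) (c i • x i) : ℝ) = G j i * c i := by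
      intro i
      rw [real_inner_smul_right, hGdef]
      simp only [Matrix.of_apply]
      ring
    rw [Finset.sum_congr rfl fun i _ => h1 i]
    have h2 : ∑ i, G j i * c i = (G.mulVec c) j := by
      simp [Matrix.mulVec, dotProduct]
    rw [h2, hc, Matrix.mulVec_mulVec, hGM, Matrix.one_mulVec]
  set s : ℝ := ∑ i, ε i * c i with hs
  have hs_eq : (inner ℝ y0 y0 : ℝ) = s := by
    rw [hy0, sum_inner, hs]
    refine Finset.sum_congr rfl fun i _ => ?_
    rw [real_inner_smul_left]
    rw [show ((∑ i, c i • x i : EuclideanSpace ℝ (Fin n))) = y0 from rfl, hinner i]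
    ring
  have hsle : s ≤ T := hqle.trans htr.le
  have hs_pos : 0 < s := by
    have h0 : (0:ℝ) ≤ inner ℝ y0 y0 := real_inner_self_nonneg
    rcases h0.lt_or_eq with h | h
    · rwa [hs_eq] at h
    · exfalso
      have hy00 : y0 = 0 := inner_self_eq_zero.mp h.symm
      have h1 := hinner ⟨0, hn⟩
      rw [hy00, inner_zero_right] at h1
      have h2 := habs ⟨0, hn⟩
      rw [← h1] at h2
      norm_num at h2
  have hT_pos : 0 < T := hs_pos.trans_le hsle
  set r : ℝ := Real.sqrt s with hr
  have hr_pos : 0 < r := Real.sqrt_pos.mpr hs_pos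
  have hnorm0 : ‖y0‖ = r := by
    have h3 : s = ‖y0‖ ^ 2 := by rw [← hs_eq, real_inner_self_eq_norm_sq]
    rw [hr, h3, Real.sqrt_sq (norm_nonneg _)]
  set y : EuclideanSpace ℝ (Fin n) := r⁻¹ • y0 with hy
  have hymem : y ∈ Metric.sphere (0 : EuclideanSpace ℝ (Fin n)) 1 := by
    rw [mem_sphere_zero_iff_norm, hy, norm_smul, hnorm0, Real.norm_eq_abs,
      abs_of_pos (inv_pos.mpr hr_pos),
      inv_mul_cancel₀ hr_pos.ne']
  have hval : ∀ i, (inner ℝ (x i) y : ℝ) = r⁻¹ * ε i := by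
    intro i
    rw [hy, real_inner_smul_right, hinner]
  have hprod : |∏ i, (inner ℝ (x i) y : ℝ)| = (r⁻¹) ^ n := by
    rw [Finset.abs_prod]
    have h4 : ∀ i ∈ Finset.univ, |(inner ℝ (x i) y : ℝ)| = r⁻¹ := by
      intro i _
      rw [hval i, abs_mul, habs i, mul_one, abs_of_pos (inv_pos.mpr hr_pos)]
    rw [Finset.prod_congr rfl h4, Finset.prod_const, Finset.card_univ, Fintype.card_fin]
  have hbdd : BddAbove (Set.range fun z : Metric.sphere (0 : EuclideanSpace ℝ (Fin n)) 1 =>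
      |∏ i, (inner ℝ (x i) (z : EuclideanSpace ℝ (Fin n)) : ℝ)|) := by
    refine ⟨1, ?_⟩
    rintro v ⟨z, rfl⟩
    show |∏ i, (inner ℝ (x i) (z : EuclideanSpace ℝ (Fin n)) : ℝ)| ≤ 1
    rw [Finset.abs_prod]
    refine Finset.prod_le_one (fun i _ => abs_nonneg _) fun i _ => ?_
    calc |(inner ℝ (x i) (z : EuclideanSpace ℝ (Fin n)) : ℝ)|
        ≤ ‖x i‖ * ‖(z : EuclideanSpace ℝ (Fin n))‖ := abs_real_inner_le_norm _ _
      _ = 1 := by rw [hx i, mem_sphere_zero_iff_norm.mp z.2, one_mul]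
  have key : ((n : ℝ) / T) ^ ((n : ℝ) / 2) * (n : ℝ) ^ (-(n : ℝ) / 2) ≤ (r⁻¹) ^ n := by
    have hn' : (0:ℝ) < n := Nat.cast_pos.mpr hn
    set E : ℝ := (n : ℝ) / 2 with hE
    have hE0 : 0 ≤ E := by positivity
    have e1 : ((n:ℝ)/T) ^ E = (n:ℝ) ^ E / T ^ E := Real.div_rpow hn'.le hT_pos.le E
    have e2 : (n:ℝ) ^ E * (n:ℝ) ^ (-E) = 1 := by
      rw [← Real.rpow_add hn', add_neg_cancel, Real.rpow_zero]
    have e3 : -(n:ℝ)/2 = -E := by rw [hE]; ring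
    have e4 : ((n:ℝ)/T) ^ E * (n:ℝ) ^ (-E) = T ^ (-E) := by
      rw [e1, div_mul_eq_mul_div, e2, Real.rpow_neg hT_pos.le, one_div]
    have e5 : T ^ (-E) ≤ s ^ (-E) :=
      Real.rpow_le_rpow_of_nonpos hs_pos hsle (neg_nonpos.mpr hE0)
    have e6 : s ^ (-E) = (r⁻¹) ^ n := by
      have h7 : r ^ (n : ℝ) = s ^ E := by
        rw [hr, Real.sqrt_eq_rpow, ← Real.rpow_mul hs_pos.le]
        congr 1
        rw [hE]; ring
      rw [inv_pow, ← Real.rpow_natCast r n, h7, ← Real.rpow_neg hs_pos.le]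
    rw [e3, e4, ← e6]
    exact e5
  calc ((n : ℝ) / T) ^ ((n : ℝ) / 2) * (n : ℝ) ^ (-(n : ℝ) / 2)
      ≤ (r⁻¹) ^ n := key
    _ = |∏ i, (inner ℝ (x i) y : ℝ)| := hprod.symm
    _ ≤ ⨆ z : Metric.sphere (0 : EuclideanSpace ℝ (Fin n)) 1,
        |∏ i, (inner ℝ (x i) (z : EuclideanSpace ℝ (Fin n)) : ℝ)| :=
      le_ciSup hbdd ⟨y, hymem⟩
end

section
/- Let x_1, ..., x_n be unit vectors in ℝ^n, and let λ_1 denote the smallest eigenvalue of the Gram matrix XX* = [⟨x_i, x_j⟩]. Then there exists a unit vector y in ℝ^n such that |⟨x_1,y⟩ · ⟨x_2,y⟩ ⋯ ⟨x_n,y⟩| ≥ (λ_1/n)^{n/2}. -/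
open scoped BigOperators
open Matrix

lemma rayleigh_lower {n : ℕ} (G : Matrix (Fin n) (Fin n) ℝ) (hG : G.IsHermitian)
    (lam1 : ℝ) (hl : ∀ i, lam1 ≤ hG.eigenvalues i) (c : Fin n → ℝ) :
    lam1 * ∑ i, c i ^ 2 ≤ c ⬝ᵥ G *ᵥ c := by
  set U : Matrix (Fin n) (Fin n) ℝ := (hG.eigenvectorUnitary : Matrix (Fin n) (Fin n) ℝ) with hU
  have hGe : G = U * Matrix.diagonal (RCLike.ofReal ∘ hG.eigenvalues) * star U :=
    hG.spectral_theorem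
  have hUU : U * star U = 1 := (Matrix.mem_unitaryGroup_iff).mp hG.eigenvectorUnitary.2
  set d : Fin n → ℝ := star U *ᵥ c with hd
  have h1 : c ⬝ᵥ G *ᵥ c = ∑ i, hG.eigenvalues i * d i ^ 2 := by
    conv_lhs => rw [hGe]
    rw [← Matrix.mulVec_mulVec, ← Matrix.mulVec_mulVec, dotProduct_mulVec c U]
    have hv : Matrix.vecMul c U = d := by
      rw [hd, Matrix.star_eq_conjTranspose, Matrix.conjTranspose_eq_transpose_of_trivial,
        Matrix.mulVec_transpose]
    rw [hv]
    simp [dotProduct, Matrix.mulVec_diagonal, mul_comm, pow_two]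
    ring_nf
    exact Finset.sum_congr rfl fun i _ => by ring
  have h2 : ∑ i, d i ^ 2 = ∑ i, c i ^ 2 := by
    have : d ⬝ᵥ d = c ⬝ᵥ c := by
      rw [hd, dotProduct_mulVec, Matrix.star_eq_conjTranspose,
        Matrix.conjTranspose_eq_transpose_of_trivial, Matrix.vecMul_transpose,
        Matrix.mulVec_mulVec]
      have hUUT : U * Uᵀ = 1 := by
        rw [← Matrix.conjTranspose_eq_transpose_of_trivial, ← Matrix.star_eq_conjTranspose]; exact hUU
      rw [hUUT, Matrix.one_mulVec]
    simpa [dotProduct, pow_two] using this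
  rw [h1, ← h2, Finset.mul_sum]
  exact Finset.sum_le_sum fun i _ => mul_le_mul_of_nonneg_right (hl i) (sq_nonneg _)

lemma gram_quad {n : ℕ} (x : Fin n → EuclideanSpace ℝ (Fin n)) (c : Fin n → ℝ) :
    c ⬝ᵥ (Matrix.of fun i j => (inner ℝ (x i) (x j) : ℝ)) *ᵥ c
      = ‖∑ i, c i • x i‖ ^ 2 := by
  rw [← real_inner_self_eq_norm_sq]
  rw [sum_inner]
  simp only [dotProduct, Matrix.mulVec, Matrix.of_apply, dotProduct,
    real_inner_smul_left, inner_sum, real_inner_smul_right]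
  refine Finset.sum_congr rfl fun i _ => ?_
  rw [Finset.mul_sum]
  exact Finset.sum_congr rfl fun j _ => by ring

set_option maxHeartbeats 1000000 in
/-- Marcus' estimate: if `x 1, ..., x n` are unit vectors in `ℝⁿ` and `λ₁` is the smallest
eigenvalue of the Gram matrix `[⟨x i, x j⟩]`, then there exists a unit vector `y` with
`|⟨x 1, y⟩ ⋯ ⟨x n, y⟩| ≥ (λ₁/n)^{n/2}`. -/
theorem stmt5 (n : ℕ) (hn : 0 < n) (x : Fin n → EuclideanSpace ℝ (Fin n))
    (hx : ∀ i, ‖x i‖ = 1)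
    (G : Matrix (Fin n) (Fin n) ℝ)
    (hGdef : G = Matrix.of fun i j => (inner ℝ (x i) (x j) : ℝ))
    (hG : G.IsHermitian)
    (lam1 : ℝ) (hlam1 : IsLeast (Set.range hG.eigenvalues) lam1) :
    ∃ y : EuclideanSpace ℝ (Fin n), ‖y‖ = 1 ∧
      (lam1 / n) ^ ((n : ℝ) / 2) ≤ |∏ i, (inner ℝ (x i) y : ℝ)| := by
  have hn' : (0:ℝ) < n := by exact_mod_cast hn
  -- key quadratic form inequality
  have key : ∀ c : Fin n → ℝ, lam1 * ∑ i, c i ^ 2 ≤ ‖∑ i, c i • x i‖ ^ 2 := by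
    intro c
    have h := rayleigh_lower G hG lam1 (fun i => hlam1.2 ⟨i, rfl⟩) c
    rwa [hGdef, gram_quad] at h
  -- lam1 is nonnegative
  have hPSD : G.PosSemidef := by
    refine Matrix.PosSemidef.of_dotProduct_mulVec_nonneg hG fun c => ?_
    have hsc : star c = c := by ext i; simp
    rw [hsc, hGdef, gram_quad]
    positivity
  have hlam0 : 0 ≤ lam1 := by
    obtain ⟨i, hi⟩ := hlam1.1
    exact hi ▸ hPSD.eigenvalues_nonneg i
  rcases eq_or_lt_of_le hlam0 with h0 | hpos
  · -- lam1 = 0 : RHS is 0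
    refine ⟨x ⟨0, hn⟩, hx _, ?_⟩
    rw [← h0, zero_div, Real.zero_rpow (by positivity)]
    exact abs_nonneg _
  -- lam1 > 0 case
  -- linear independence
  have hli : LinearIndependent ℝ x := by
    rw [Fintype.linearIndependent_iff]
    intro c hc i
    have h := key c
    rw [hc, norm_zero] at h
    have hsum : ∑ j, c j ^ 2 ≤ 0 := by nlinarith
    have hsum0 : ∑ j, c j ^ 2 = 0 :=
      le_antisymm hsum (Finset.sum_nonneg fun j _ => sq_nonneg _)
    have := (Finset.sum_eq_zero_iff_of_nonneg (fun j _ => sq_nonneg (c j))).mp hsum0 i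
      (Finset.mem_univ i)
    exact sq_eq_zero_iff.mp this
  have hsp : Submodule.span ℝ (Set.range x) = ⊤ := by
    have : Nonempty (Fin n) := ⟨⟨0, hn⟩⟩
    exact hli.span_eq_top_of_card_eq_finrank (by simp)
  -- the map v ↦ (⟪x i, v⟫) is surjective
  let T : EuclideanSpace ℝ (Fin n) →ₗ[ℝ] (Fin n → ℝ) :=
    LinearMap.pi fun i => ((innerSL ℝ (x i)) : EuclideanSpace ℝ (Fin n) →ₗ[ℝ] ℝ)
  have hTinj : Function.Injective T := by
    rw [← LinearMap.ker_eq_bot, Submodule.eq_bot_iff]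
    intro v hv
    have hv' : ∀ i, (inner ℝ (x i) v : ℝ) = 0 := fun i => congrFun hv i
    have horth : ∀ w ∈ Submodule.span ℝ (Set.range x), (inner ℝ w v : ℝ) = 0 := by
      intro w hw
      induction hw using Submodule.span_induction with
      | mem w hw => obtain ⟨i, rfl⟩ := hw; exact hv' i
      | zero => simp
      | add a b _ _ ha hb => rw [inner_add_left, ha, hb, add_zero]
      | smul a m _ hm => rw [real_inner_smul_left, hm, mul_zero]
    have : (inner ℝ v v : ℝ) = 0 := horth v (hsp ▸ Submodule.mem_top)
    exact inner_self_eq_zero.mp this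
  have hTsurj : Function.Surjective T :=
    (LinearMap.injective_iff_surjective_of_finrank_eq_finrank (by simp)).mp hTinj
  obtain ⟨y₁, hy₁⟩ := hTsurj (fun _ => (1:ℝ))
  have hy₁' : ∀ i, (inner ℝ (x i) y₁ : ℝ) = 1 := fun i => congrFun hy₁ i
  have hy₁0 : y₁ ≠ 0 := by
    intro h
    have := hy₁' ⟨0, hn⟩
    rw [h, inner_zero_right] at this
    norm_num at this
  -- maximize |φ| on the unit sphere
  set φ : EuclideanSpace ℝ (Fin n) → ℝ := fun y => ∏ i, (inner ℝ (x i) y : ℝ) with hφdef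
  have hφcont : Continuous φ := by
    apply continuous_finset_prod
    intro i _
    exact (innerSL ℝ (x i)).continuous
  set u : EuclideanSpace ℝ (Fin n) := (‖y₁‖⁻¹ : ℝ) • y₁ with hudef
  have hu : ‖u‖ = 1 := norm_smul_inv_norm hy₁0
  have huS : u ∈ Metric.sphere (0 : EuclideanSpace ℝ (Fin n)) 1 := by
    simpa [mem_sphere_zero_iff_norm] using hu
  obtain ⟨y₀, hy₀S, hy₀max⟩ :=
    (isCompact_sphere (0 : EuclideanSpace ℝ (Fin n)) 1).exists_isMaxOn ⟨u, huS⟩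
      ((continuous_abs.comp hφcont).continuousOn)
  have hy₀ : ‖y₀‖ = 1 := mem_sphere_zero_iff_norm.mp hy₀S
  have hφu : φ u = (‖y₁‖⁻¹)^n := by
    have hiu : ∀ i, (inner ℝ (x i) u : ℝ) = ‖y₁‖⁻¹ := by
      intro i; rw [hudef, real_inner_smul_right, hy₁' i, mul_one]
    calc φ u = ∏ i, (inner ℝ (x i) u : ℝ) := rfl
      _ = ∏ _i : Fin n, ‖y₁‖⁻¹ := Finset.prod_congr rfl fun i _ => hiu i
      _ = (‖y₁‖⁻¹)^n := by simp
  have hPpos : 0 < |φ y₀| := by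
    have h1 : (0:ℝ) < |φ u| := by
      rw [hφu, abs_pow, abs_inv, abs_norm]
      have : 0 < ‖y₁‖ := norm_pos_iff.mpr hy₁0
      positivity
    exact lt_of_lt_of_le h1 (hy₀max huS)
  have hP0 : φ y₀ ≠ 0 := fun h => by simp [h] at hPpos
  have ht : ∀ i, (inner ℝ (x i) y₀ : ℝ) ≠ 0 := by
    intro i
    exact Finset.prod_ne_zero_iff.mp hP0 i (Finset.mem_univ i)
  refine ⟨y₀, hy₀, ?_⟩
  set P : ℝ := ∏ i, (inner ℝ (x i) y₀ : ℝ) with hPdef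
  have hP0' : P ≠ 0 := hP0
  set c : Fin n → ℝ := fun i => ∏ j ∈ Finset.univ.erase i, (inner ℝ (x j) y₀ : ℝ) with hcdef
  set f : EuclideanSpace ℝ (Fin n) → ℝ := fun y => (inner ℝ y y : ℝ) with hfdef
  have hf' : HasStrictFDerivAt f
      ((fderivInnerCLM ℝ (y₀, y₀)).comp
        ((ContinuousLinearMap.id ℝ _).prod (ContinuousLinearMap.id ℝ _))) y₀ :=
    (hasStrictFDerivAt_id y₀).inner (𝕜 := ℝ) (hasStrictFDerivAt_id y₀)
  have hφ' : HasStrictFDerivAt φ (∑ i, c i • innerSL ℝ (x i)) y₀ :=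
    HasStrictFDerivAt.finset_prod (fun i _ => (innerSL ℝ (x i)).hasStrictFDerivAt)
  have hy₀inner : (inner ℝ y₀ y₀ : ℝ) = 1 := by
    rw [real_inner_self_eq_norm_mul_norm, hy₀, mul_one]
  have hsetS : {y : EuclideanSpace ℝ (Fin n) | f y = f y₀}
      = Metric.sphere (0 : EuclideanSpace ℝ (Fin n)) 1 := by
    ext z
    simp only [Set.mem_setOf_eq, mem_sphere_zero_iff_norm]
    rw [show f y₀ = 1 from hy₀inner,
      show f z = ‖z‖ * ‖z‖ from real_inner_self_eq_norm_mul_norm z]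
    constructor
    · intro h
      rcases mul_self_eq_one_iff.mp h with h1 | h1
      · exact h1
      · nlinarith [norm_nonneg z]
    · intro h; rw [h]; norm_num
  have habs : ∀ z ∈ Metric.sphere (0 : EuclideanSpace ℝ (Fin n)) 1, |φ z| ≤ |P| :=
    fun z hz => hy₀max hz
  have hextr : IsLocalExtrOn φ {y | f y = f y₀} y₀ := by
    rw [hsetS]
    rcases lt_or_gt_of_ne hP0' with hneg | hposP
    · refine Or.inl ?_
      have hmin : IsMinOn φ (Metric.sphere (0 : EuclideanSpace ℝ (Fin n)) 1) y₀ := by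
        intro z hz
        have h1 := habs z hz
        have h2 : |P| = -P := abs_of_neg hneg
        have h3 : -|φ z| ≤ φ z := neg_abs_le _
        simp only [Set.mem_setOf_eq]
        linarith
      exact hmin.filter_mono inf_le_right
    · refine Or.inr ?_
      have hmax : IsMaxOn φ (Metric.sphere (0 : EuclideanSpace ℝ (Fin n)) 1) y₀ := by
        intro z hz
        have h1 := habs z hz
        have h2 : |P| = P := abs_of_pos hposP
        have h3 : φ z ≤ |φ z| := le_abs_self _
        simp only [Set.mem_setOf_eq]
        linarith
      exact hmax.filter_mono inf_le_right
  obtain ⟨a, b, hab, heq⟩ := hextr.exists_multipliers_of_hasStrictFDerivAt_1d hf' hφ'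
  have heval : ∀ v : EuclideanSpace ℝ (Fin n),
      a * ((inner ℝ y₀ v : ℝ) + (inner ℝ v y₀ : ℝ))
        + b * (∑ i, c i * (inner ℝ (x i) v : ℝ)) = 0 := by
    intro v
    have h := congrFun (congrArg DFunLike.coe heq) v
    simpa [ContinuousLinearMap.add_apply, ContinuousLinearMap.smul_apply,
      ContinuousLinearMap.comp_apply, ContinuousLinearMap.prod_apply,
      fderivInnerCLM_apply, ContinuousLinearMap.sum_apply, innerSL_apply_apply,
      smul_eq_mul] using h
  have hcP : ∀ i, c i * (inner ℝ (x i) y₀ : ℝ) = P := by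
    intro i
    rw [hcdef, hPdef]
    exact Finset.prod_erase_mul Finset.univ _ (Finset.mem_univ i)
  have hy₀eq : a * 2 + b * ((n : ℝ) * P) = 0 := by
    have h := heval y₀
    rw [hy₀inner] at h
    have hsum : ∑ i, c i * (inner ℝ (x i) y₀ : ℝ) = (n : ℝ) * P := by
      rw [Finset.sum_congr rfl fun i _ => hcP i]
      simp [Finset.sum_const, Finset.card_univ]
    rw [hsum] at h
    linarith
  have hb : b ≠ 0 := by
    intro hb0
    rw [hb0] at hy₀eq
    have ha : a = 0 := by linarith
    exact hab (by simp [ha, hb0, Prod.ext_iff])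
  -- the stationarity identity : ∑ c i • x i = (n P) • y₀
  have hw : ∑ i, c i • x i = ((n : ℝ) * P) • y₀ := by
    rw [← sub_eq_zero, ← inner_self_eq_zero (𝕜 := ℝ)]
    set w : EuclideanSpace ℝ (Fin n) := (∑ i, c i • x i) - ((n : ℝ) * P) • y₀ with hwdef
    have hwv : ∀ v : EuclideanSpace ℝ (Fin n), (inner ℝ w v : ℝ) = 0 := by
      intro v
      rw [hwdef, inner_sub_left, sum_inner, real_inner_smul_left]
      have h1 := heval v
      have hcomm : (inner ℝ v y₀ : ℝ) = (inner ℝ y₀ v : ℝ) := by rw [real_inner_comm]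
      have h2s : (a * 2 + b * ((n : ℝ) * P)) * (inner ℝ y₀ v : ℝ) = 0 := by
        rw [hy₀eq]; ring
      have hsmul : ∀ i, (inner ℝ (c i • x i) v : ℝ) = c i * (inner ℝ (x i) v : ℝ) :=
        fun i => real_inner_smul_left _ _ _
      rw [Finset.sum_congr rfl fun i _ => hsmul i]
      have hbz : b * ((∑ i, c i * (inner ℝ (x i) v : ℝ))
          - (n : ℝ) * P * (inner ℝ y₀ v : ℝ)) = 0 := by
        linear_combination h1 - h2s - a * hcomm
      rcases mul_eq_zero.mp hbz with h | h
      · exact absurd h hb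
      · exact h
    exact hwv w
  -- combine with the quadratic form bound
  have hkey2 : lam1 * ∑ i, c i ^ 2 ≤ ((n : ℝ) * P) ^ 2 := by
    have h := key c
    rw [hw, norm_smul, hy₀, mul_one] at h
    calc lam1 * ∑ i, c i ^ 2 ≤ ‖((n : ℝ) * P)‖ ^ 2 := h
      _ = ((n : ℝ) * P) ^ 2 := by rw [Real.norm_eq_abs, sq_abs]
  -- AM-GM and conclusion
  have hPt : ∏ i, (inner ℝ (x i) y₀ : ℝ) = P := rfl
  have hprodc : ∏ i, c i = P ^ (n - 1) := by
    have hci : ∀ i, c i = P / (inner ℝ (x i) y₀ : ℝ) := by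
      intro i
      rw [eq_div_iff (ht i)]
      exact hcP i
    calc ∏ i, c i = ∏ i, (P / (inner ℝ (x i) y₀ : ℝ)) :=
          Finset.prod_congr rfl fun i _ => hci i
      _ = P ^ n / ∏ i, (inner ℝ (x i) y₀ : ℝ) := by
          rw [Finset.prod_div_distrib, Finset.prod_const, Finset.card_univ, Fintype.card_fin]
      _ = P ^ n / P ^ 1 := by rw [hPt, pow_one]
      _ = P ^ (n - 1) := (pow_sub₀ P hP0' hn).symm
  set Q : ℝ := P ^ 2 with hQdef
  have hQpos : 0 < Q := by positivity
  have hamgm := Real.geom_mean_le_arith_mean_weighted Finset.univ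
    (fun _ => 1 / (n : ℝ)) (fun i => c i ^ 2)
    (fun i _ => by positivity)
    (by rw [Finset.sum_const, Finset.card_univ, Fintype.card_fin, nsmul_eq_mul]; field_simp)
    (fun i _ => sq_nonneg _)
  have hlhs : ∏ i, ((c i ^ 2) ^ ((1:ℝ) / n)) = (Q ^ (n-1) : ℝ) ^ ((1:ℝ) / n) := by
    rw [Real.finset_prod_rpow Finset.univ _ (fun i _ => sq_nonneg _)]
    congr 1
    rw [Finset.prod_pow, hprodc, hQdef, ← pow_mul, ← pow_mul]
    ring_nf
  have hrhs : ∑ i, (1 / (n:ℝ)) * c i ^ 2 = (1/(n:ℝ)) * ∑ i, c i ^ 2 := by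
    rw [Finset.mul_sum]
  set α : ℝ := ((n:ℝ) - 1) / n with hαdef
  have hQα : ((Q ^ (n-1) : ℝ)) ^ ((1:ℝ)/n) = Q ^ α := by
    rw [← Real.rpow_natCast Q (n-1), ← Real.rpow_mul hQpos.le, hαdef]
    congr 1
    rw [Nat.cast_sub hn]
    push_cast
    field_simp
  -- combine
  have hup : lam1 * ((n:ℝ) * Q ^ α) ≤ (n:ℝ)^2 * Q := by
    have h1 : (n:ℝ) * Q ^ α ≤ ∑ i, c i ^ 2 := by
      have := hamgm
      rw [hrhs] at this
      rw [hlhs, hQα] at this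
      calc (n:ℝ) * Q ^ α ≤ (n:ℝ) * ((1/(n:ℝ)) * ∑ i, c i ^ 2) :=
            mul_le_mul_of_nonneg_left this (le_of_lt hn')
        _ = ∑ i, c i ^ 2 := by field_simp
    calc lam1 * ((n:ℝ) * Q ^ α) ≤ lam1 * ∑ i, c i ^ 2 :=
          mul_le_mul_of_nonneg_left h1 hlam0
      _ ≤ ((n:ℝ) * P)^2 := hkey2
      _ = (n:ℝ)^2 * Q := by rw [hQdef]; ring
  have hQαpos : 0 < Q ^ α := Real.rpow_pos_of_pos hQpos α
  have h5 : lam1 / n ≤ Q ^ ((1:ℝ)/n) := by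
    have hQsplit : Q = Q ^ α * Q ^ ((1:ℝ)/n) := by
      rw [← Real.rpow_add hQpos, hαdef]
      rw [show ((n:ℝ)-1)/n + 1/n = 1 by field_simp; ring, Real.rpow_one]
    have h6 : lam1 * ((n:ℝ) * Q ^ α) ≤ (Q ^ ((1:ℝ)/n) * (n:ℝ)) * ((n:ℝ) * Q ^ α) := by
      calc lam1 * ((n:ℝ) * Q ^ α) ≤ (n:ℝ)^2 * Q := hup
        _ = (Q ^ ((1:ℝ)/n) * (n:ℝ)) * ((n:ℝ) * Q ^ α) := by
            rw [show (Q ^ ((1:ℝ)/n) * (n:ℝ)) * ((n:ℝ) * Q ^ α)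
              = (n:ℝ)^2 * (Q ^ α * Q ^ ((1:ℝ)/n)) from by ring, ← hQsplit]
    have h7 := le_of_mul_le_mul_right h6 (mul_pos hn' hQαpos)
    rw [div_le_iff₀ hn']
    linarith
  have h8 := Real.rpow_le_rpow (by positivity) h5 (by positivity : (0:ℝ) ≤ (n:ℝ)/2)
  calc (lam1 / n) ^ ((n:ℝ)/2) ≤ (Q ^ ((1:ℝ)/n)) ^ ((n:ℝ)/2) := h8
    _ = Q ^ ((1:ℝ)/2) := by
        rw [← Real.rpow_mul hQpos.le]
        congr 1
        field_simp
    _ = |P| := by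
        rw [← Real.sqrt_eq_rpow, hQdef, Real.sqrt_sq_eq_abs]
    _ = |∏ i, (inner ℝ (x i) y₀ : ℝ)| := by rw [hPt]
end
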